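/- On a compact almost Hermitian manifold (M,J,g,ω) of real dimension 2n, there is a well-defined injective linear map from H^{p,q}_{BC} ∩ A^{p,q}_s into the Bott-Chern cohomology group H^{p,q}_{BC}(M) := (ker d ∩ A^{p,q}_s)/(∂∂̄ A^{p-1,q-1}_s), induced by the inclusion of harmonic representatives. -/

import Mathlib

/-!
STATEMENT 19: On a compact almost Hermitian 2n-manifold there is a well-defined
injective linear map from H^{p,q}_{BC} ∩ A^{p,q}_s into the Bott-Chern cohomology
H^{p,q}_{BC}(M) = (ker d ∩ A^{p,q}_s)/(∂∂̄ A^{p-1,q-1}_s), induced by the inclusion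
of harmonic representatives.

Model: `V` is the space of complex-valued forms with its L² inner product (coming
from compactness), bigraded by `A`, with operators d = μ + ∂ + ∂̄ + μ̄ and the
formal adjoints ∂*, ∂̄*.  Here A^{p,q}_s = A^{p,q} ∩ ker μ̄ ∩ ker ∂̄² ∩ ker ∂² ∩ ker μ,
and H^{p,q}_{BC} = A^{p,q} ∩ ker ∂ ∩ ker ∂̄ ∩ ker(∂̄*∂*) (the kernel of the
Bott-Chern Laplacian).  Conclusion: harmonic forms in A^{p,q}_s are d-closed, and
the quotient map by ∂∂̄ A^{p-1,q-1}_s is injective on H^{p,q}_{BC} ∩ A^{p,q}_s.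
-/

theorem bc_harmonic_injects_into_bc_cohomology
    (V : Type*) [NormedAddCommGroup V] [InnerProductSpace ℂ V]
    (A : ℤ → ℤ → Submodule ℂ V) (p q : ℤ)
    (d mu del delbar mubar delSt delbarSt : V →ₗ[ℂ] V)
    (hd : d = mu + del + delbar + mubar)
    (hadj_del : ∀ x y : V, (inner ℂ (del x) y : ℂ) = inner ℂ x (delSt y))
    (hadj_delbar : ∀ x y : V, (inner ℂ (delbar x) y : ℂ) = inner ℂ x (delbarSt y)) :
    let As : ℤ → ℤ → Submodule ℂ V := fun p' q' =>
      A p' q' ⊓ LinearMap.ker mubar ⊓ LinearMap.ker (delbar ∘ₗ delbar)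
        ⊓ LinearMap.ker (del ∘ₗ del) ⊓ LinearMap.ker mu
    let HBC : Submodule ℂ V :=
      A p q ⊓ LinearMap.ker del ⊓ LinearMap.ker delbar
        ⊓ LinearMap.ker (delbarSt ∘ₗ delSt)
    let N : Submodule ℂ V := Submodule.map (del ∘ₗ delbar) (As (p - 1) (q - 1))
    (↑(HBC ⊓ As p q) : Set V) ⊆ ↑(LinearMap.ker d ⊓ As p q) ∧
    Set.InjOn N.mkQ ↑(HBC ⊓ As p q) := by
  intro As HBC N
  have key : ∀ x ∈ HBC ⊓ As p q, d x = 0 ∧ x ∈ As p q := by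
    rintro x ⟨⟨⟨⟨hA, hdel⟩, hdelbar⟩, hbc⟩, hAs⟩
    have hmubar := hAs.1.1.1.2
    have hmu := hAs.2
    refine ⟨?_, hAs⟩
    simp [hd, LinearMap.mem_ker.mp hmu, LinearMap.mem_ker.mp hmubar,
      LinearMap.mem_ker.mp hdel, LinearMap.mem_ker.mp hdelbar]
  constructor
  · rintro x hx
    obtain ⟨h1, h2⟩ := key x hx
    exact ⟨LinearMap.mem_ker.mpr h1, h2⟩
  · intro x hx y hy hxy
    have hxbc : x ∈ LinearMap.ker (delbarSt ∘ₗ delSt) := hx.1.2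
    have hybc : y ∈ LinearMap.ker (delbarSt ∘ₗ delSt) := hy.1.2
    have hsub : x - y ∈ N := by
      rw [Submodule.mkQ_apply, Submodule.mkQ_apply, Submodule.Quotient.eq] at hxy
      exact hxy
    obtain ⟨z, -, hz⟩ := hsub
    have hker : delbarSt (delSt (x - y)) = 0 := by
      have hx0 : delbarSt (delSt x) = 0 := LinearMap.mem_ker.mp hxbc
      have hy0 : delbarSt (delSt y) = 0 := LinearMap.mem_ker.mp hybc
      simp [map_sub, hx0, hy0]
    have hinner : (inner ℂ (x - y) (x - y) : ℂ) = 0 := by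
      have hzv : del (delbar z) = x - y := hz
      calc (inner ℂ (x - y) (x - y) : ℂ) = inner ℂ (del (delbar z)) (x - y) := by rw [hzv]
        _ = inner ℂ (delbar z) (delSt (x - y)) := hadj_del _ _
        _ = inner ℂ z (delbarSt (delSt (x - y))) := hadj_delbar _ _
        _ = 0 := by rw [hker]; simp
    have : x - y = 0 := inner_self_eq_zero.mp hinner
    exact sub_eq_zero.mp this
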